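/- Let k be an integer with 1 ≤ k < n. In U(𝕂G) the commutator of the units u_k = a^k + (a-1)bâ and w = 1 + (a-1)bâ satisfies (u_k, w) = u_k⁻¹w⁻¹u_k w = 1 + (a^{-k} - a^{1-k} + a - 1)bâ. Moreover, if 𝕂 has characteristic zero and b ∉ N_G(⟨a^k⟩), then (u_k, w) ≠ 1. -/

import Mathlib

private lemma aux_conj_zpow {G : Type*} [Group G] (b y : G) (t : ℤ) :
    (b⁻¹ * y * b) ^ t = b⁻¹ * y ^ t * b := by
  have := map_zpow (MulAut.conj b⁻¹) y t
  simpa [MulAut.conj_apply] using this.symm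

private lemma aux_zpowers_gcd {G : Type*} [Group G] (a : G) (n j : ℕ) (hn : 0 < n)
    (h1 : a ^ n = 1) :
    Subgroup.zpowers (a ^ j) = Subgroup.zpowers (a ^ Nat.gcd n j) := by
  apply le_antisymm
  · rw [Subgroup.zpowers_le]
    refine Subgroup.mem_zpowers_iff.mpr ⟨((j / Nat.gcd n j : ℕ) : ℤ), ?_⟩
    rw [zpow_natCast, ← pow_mul, Nat.mul_div_cancel' (Nat.gcd_dvd_right n j)]
  · rw [Subgroup.zpowers_le]
    refine Subgroup.mem_zpowers_iff.mpr ⟨Nat.gcdB n j, ?_⟩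
    have hb : ((Nat.gcd n j : ℤ)) = n * Nat.gcdA n j + j * Nat.gcdB n j := Nat.gcd_eq_gcd_ab n j
    have : a ^ ((Nat.gcd n j : ℤ)) = a ^ ((n : ℤ) * Nat.gcdA n j + (j : ℤ) * Nat.gcdB n j) := by
      rw [← hb]
    rw [zpow_add, zpow_mul, zpow_mul, zpow_natCast, zpow_natCast, h1, one_zpow, one_mul] at this
    rw [zpow_natCast a j] at this
    exact this.symm

private lemma aux_normalizer {G : Type*} [Group G] (a b : G) (n : ℕ) (hn : 0 < n)
    (ha : orderOf a = n) (m : ℕ) (hm : a ^ m ≠ 1)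
    (h : b⁻¹ * a ^ m * b ∈ Subgroup.zpowers a) :
    b ∈ Subgroup.normalizer (Subgroup.zpowers (a ^ m)) := by
  have han : a ^ n = 1 := by rw [← ha]; exact pow_orderOf_eq_one a
  -- write the conjugate as a natural power of a
  obtain ⟨t, ht⟩ := Subgroup.mem_zpowers_iff.mp h
  have hnz : (n : ℤ) ≠ 0 := by exact_mod_cast hn.ne'
  set j : ℕ := (t % n).toNat with hj
  have htj : a ^ j = b⁻¹ * a ^ m * b := by
    have h1 : a ^ (t : ℤ) = a ^ ((n : ℤ) * (t / n) + t % n) := by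
      rw [Int.mul_ediv_add_emod]
    rw [zpow_add, zpow_mul, zpow_natCast, han, one_zpow, one_mul] at h1
    rw [← ht, h1, ← zpow_natCast a j, hj, Int.toNat_of_nonneg (Int.emod_nonneg t hnz)]
  -- orders agree
  have horder : orderOf (a ^ j) = orderOf (a ^ m) := by
    rw [htj]
    have := orderOf_injective (MulAut.conj b⁻¹).toMonoidHom (MulEquiv.injective _) (a ^ m)
    exact by simpa [MulAut.conj_apply] using this
  have hj0 : j ≠ 0 := by
    intro h0
    rw [h0, pow_zero] at htj
    apply hm
    have : a ^ m = b * 1 * b⁻¹ := by rw [htj]; group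
    simpa using this
  have hm0 : m ≠ 0 := by intro h0; rw [h0, pow_zero] at hm; exact hm rfl
  have hgcd : Nat.gcd n j = Nat.gcd n m := by
    have h1 : orderOf (a ^ j) = n / Nat.gcd n j := by rw [orderOf_pow' a hj0, ha]
    have h2 : orderOf (a ^ m) = n / Nat.gcd n m := by rw [orderOf_pow' a hm0, ha]
    have h3 : n / Nat.gcd n j = n / Nat.gcd n m := by rw [← h1, ← h2, horder]
    have d1 : Nat.gcd n j ∣ n := Nat.gcd_dvd_left n j
    have d2 : Nat.gcd n m ∣ n := Nat.gcd_dvd_left n m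
    have := Nat.div_div_self d1 hn.ne'
    rw [h3, Nat.div_div_self d2 hn.ne'] at this
    calc Nat.gcd n j = n / (n / Nat.gcd n j) := (Nat.div_div_self d1 hn.ne').symm
      _ = n / (n / Nat.gcd n m) := by rw [h3]
      _ = Nat.gcd n m := Nat.div_div_self d2 hn.ne'
  have hzp : Subgroup.zpowers (a ^ j) = Subgroup.zpowers (a ^ m) := by
    rw [aux_zpowers_gcd a n j hn han, aux_zpowers_gcd a n m hn han, hgcd]
  rw [Subgroup.mem_normalizer_iff]
  intro x
  constructor
  · intro hx
    rw [← hzp] at hx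
    obtain ⟨s, hs⟩ := Subgroup.mem_zpowers_iff.mp hx
    rw [← hs, htj, aux_conj_zpow]
    have : b * (b⁻¹ * (a ^ m) ^ s * b) * b⁻¹ = (a ^ m) ^ s := by group
    rw [this]
    exact zpow_mem (Subgroup.mem_zpowers _) s
  · intro hx
    obtain ⟨s, hs⟩ := Subgroup.mem_zpowers_iff.mp hx
    have hxe : x = b⁻¹ * (a ^ m) ^ s * b := by
      have : b⁻¹ * (b * x * b⁻¹) * b = x := by group
      rw [← this, hs]
    rw [hxe, ← aux_conj_zpow, ← htj, ← hzp]
    exact zpow_mem (Subgroup.mem_zpowers _) s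

theorem stmt_15 {𝕂 : Type*} [CommRing 𝕂] [IsDomain 𝕂]
    {G : Type*} [Group G] (a b : G) (n : ℕ) (hn : 2 ≤ n) (ha : orderOf a = n)
    (hA : ¬ (Subgroup.zpowers a).Normal)
    (hb : b ∉ Subgroup.normalizer (Subgroup.zpowers a))
    (ahat : MonoidAlgebra 𝕂 G)
    (hahat : ahat = ∑ i ∈ Finset.range n, (MonoidAlgebra.of 𝕂 G a) ^ i)
    (k : ℕ) (hk1 : 1 ≤ k) (hkn : k < n)
    (w u : (MonoidAlgebra 𝕂 G)ˣ)
    (hw : (w : MonoidAlgebra 𝕂 G) = 1 + (MonoidAlgebra.of 𝕂 G a - 1) * MonoidAlgebra.of 𝕂 G b * ahat)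
    (hu : (u : MonoidAlgebra 𝕂 G) = MonoidAlgebra.of 𝕂 G a ^ k + (MonoidAlgebra.of 𝕂 G a - 1) * MonoidAlgebra.of 𝕂 G b * ahat) :
    ((u⁻¹ * w⁻¹ * u * w : (MonoidAlgebra 𝕂 G)ˣ) : MonoidAlgebra 𝕂 G)
        = 1 + (MonoidAlgebra.of 𝕂 G (a ^ (-(k : ℤ))) - MonoidAlgebra.of 𝕂 G (a ^ (1 - (k : ℤ)))
            + MonoidAlgebra.of 𝕂 G a - 1) * MonoidAlgebra.of 𝕂 G b * ahat ∧
    (CharZero 𝕂 → b ∉ Subgroup.normalizer (Subgroup.zpowers (a ^ k)) →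
      u⁻¹ * w⁻¹ * u * w ≠ 1) := by
  set φ := MonoidAlgebra.of 𝕂 G with hφ
  set α := φ a with hα
  set B := φ b with hB
  set e := (a ^ k)⁻¹ with he
  set E := φ e with hE
  set P := α ^ k with hP
  have han : a ^ n = 1 := by rw [← ha]; exact pow_orderOf_eq_one a
  have hαn : α ^ n = 1 := by rw [hα, ← map_pow, han, map_one]
  -- basic relations
  have hHα : ahat * α = ahat := by
    rw [hahat, Finset.sum_mul]
    simp_rw [← pow_succ]
    have e1 := Finset.sum_range_succ (fun i => α ^ i) n
    have e2 := Finset.sum_range_succ' (fun i => α ^ i) n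
    simp only [hαn, pow_zero] at e1 e2
    exact add_right_cancel (e2.symm.trans e1)
  have hHα' : ∀ x : MonoidAlgebra 𝕂 G, ahat * (α * x) = ahat * x := fun x => by
    rw [← mul_assoc, hHα]
  have hHpow : ∀ m : ℕ, ahat * α ^ m = ahat := by
    intro m; induction m with
    | zero => rw [pow_zero, mul_one]
    | succ m ih => rw [pow_succ, ← mul_assoc, ih, hHα]
  have hHP : ahat * P = ahat := hHpow k
  have hHP' : ∀ x : MonoidAlgebra 𝕂 G, ahat * (P * x) = ahat * x := fun x => by
    rw [← mul_assoc, hHP]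
  have hPE : P * E = 1 := by
    rw [hP, hE, hα, he, ← map_pow, ← map_mul, mul_inv_cancel, map_one]
  have hEP : E * P = 1 := by
    rw [hP, hE, hα, he, ← map_pow, ← map_mul, inv_mul_cancel, map_one]
  have hPE' : ∀ x : MonoidAlgebra 𝕂 G, P * (E * x) = x := fun x => by
    rw [← mul_assoc, hPE, one_mul]
  have hEP' : ∀ x : MonoidAlgebra 𝕂 G, E * (P * x) = x := fun x => by
    rw [← mul_assoc, hEP, one_mul]
  have hHE : ahat * E = ahat := by rw [← hHP, mul_assoc, hPE, mul_one, hHP]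
  have hHE' : ∀ x : MonoidAlgebra 𝕂 G, ahat * (E * x) = ahat * x := fun x => by
    rw [← mul_assoc, hHE]
  have hPα : P * α = α * P := by rw [hP, ← pow_succ, ← pow_succ']
  have hPα' : ∀ x : MonoidAlgebra 𝕂 G, P * (α * x) = α * (P * x) := fun x => by
    rw [← mul_assoc, hPα, mul_assoc]
  -- rewriting the integer powers
  have hE2 : φ (a ^ (-(k : ℤ))) = E := by
    rw [hE, he]; congr 1; rw [zpow_neg, zpow_natCast]
  have hA2 : φ (a ^ (1 - (k : ℤ))) = α * E := by
    rw [hα, hE, ← map_mul]; congr 1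
    rw [he, zpow_sub, zpow_one, zpow_natCast]
  set R : MonoidAlgebra 𝕂 G := 1 + (E - α * E + α - 1) * B * ahat with hR
  have key : (↑u * ↑w : MonoidAlgebra 𝕂 G) = ↑w * ↑u * R := by
    rw [hu, hw, hR]
    simp only [mul_add, add_mul, mul_sub, sub_mul, mul_one, one_mul, mul_assoc,
      hHα', hHP', hHE', hPE', hEP', hPα', hHα, hHP, hHE, hPE, hEP, hPα]
    abel
  have main : ((u⁻¹ * w⁻¹ * u * w : (MonoidAlgebra 𝕂 G)ˣ) : MonoidAlgebra 𝕂 G) = R := by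
    calc ((u⁻¹ * w⁻¹ * u * w : (MonoidAlgebra 𝕂 G)ˣ) : MonoidAlgebra 𝕂 G)
        = ↑u⁻¹ * (↑w⁻¹ * (↑u * ↑w)) := by simp only [Units.val_mul, mul_assoc]
      _ = ↑u⁻¹ * (↑w⁻¹ * (↑w * (↑u * R))) := by rw [key, mul_assoc]
      _ = R := by
          rw [← mul_assoc (↑w⁻¹ : MonoidAlgebra 𝕂 G) (↑w), Units.inv_mul, one_mul,
            ← mul_assoc, Units.inv_mul, one_mul]
  constructor
  · rw [hE2, hA2]; exact main
  · intro hch hbk h1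
    have hRone : R = 1 := by rw [← main, h1, Units.val_one]
    have hD0 : (E - α * E + α - 1) * B * ahat = 0 := by
      have := hRone.symm
      rw [hR] at this
      exact (left_eq_add.mp this)
    -- turn into a sum of singles
    have hsingles : ∑ i ∈ Finset.range n,
        ((MonoidAlgebra.single (e * (b * a ^ i)) (1 : 𝕂))
          - MonoidAlgebra.single (a * (e * (b * a ^ i))) 1
          + MonoidAlgebra.single (a * (b * a ^ i)) 1
          - MonoidAlgebra.single (b * a ^ i) 1) = 0 := by
      rw [← hD0, hahat, Finset.mul_sum]
      apply Finset.sum_congr rfl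
      intro i _
      have hai : α ^ i = φ (a ^ i) := by rw [hα, map_pow]
      rw [hai]
      simp only [sub_mul, add_mul, one_mul, hE, hα, hB, hφ, MonoidAlgebra.of_apply,
        MonoidAlgebra.single_mul_single, one_mul, mul_one, mul_assoc]
    have hsingles' : ∑ i ∈ Finset.range n,
        ((Finsupp.single (e * (b * a ^ i)) (1 : 𝕂))
          - Finsupp.single (a * (e * (b * a ^ i))) 1
          + Finsupp.single (a * (b * a ^ i)) 1
          - Finsupp.single (b * a ^ i) 1) = (0 : G →₀ 𝕂) := by
      have := congrArg MonoidAlgebra.coeff hsingles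
      simpa only [MonoidAlgebra.coeff_sum, MonoidAlgebra.coeff_sub, MonoidAlgebra.coeff_add,
        MonoidAlgebra.coeff_single, MonoidAlgebra.coeff_zero] using this
    classical
    have hcoef := DFunLike.congr_fun hsingles' b
    simp only [Finset.sum_apply', Finsupp.sub_apply, Finsupp.add_apply,
      Finsupp.single_apply, Finsupp.coe_zero, Pi.zero_apply] at hcoef
    simp only [Finset.sum_sub_distrib, Finset.sum_add_distrib, Finset.sum_boole] at hcoef
    set c1 := (Finset.filter (fun i => e * (b * a ^ i) = b) (Finset.range n)).card with hc1
    set c2 := (Finset.filter (fun i => a * (e * (b * a ^ i)) = b) (Finset.range n)).card with hc2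
    set c3 := (Finset.filter (fun i => a * (b * a ^ i) = b) (Finset.range n)).card with hc3
    set c4 := (Finset.filter (fun i => b * a ^ i = b) (Finset.range n)).card with hc4
    have hnat : c1 + c3 = c2 + c4 := by
      have hcast : ((c1 + c3 : ℕ) : 𝕂) = ((c2 + c4 : ℕ) : 𝕂) := by
        push_cast
        linear_combination hcoef
      exact_mod_cast hcast
    have hc4pos : 1 ≤ c4 := by
      rw [hc4]
      refine Finset.card_pos.mpr ⟨0, ?_⟩
      simp only [Finset.mem_filter, Finset.mem_range]
      exact ⟨by omega, by rw [pow_zero, mul_one]⟩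
    have hak1 : a ^ k ≠ 1 := by
      intro hcon
      have := orderOf_dvd_of_pow_eq_one hcon
      rw [ha] at this
      have := Nat.le_of_dvd (by omega) this
      omega
    have ha1 : a ^ 1 ≠ 1 := by
      intro hcon
      have := orderOf_dvd_of_pow_eq_one hcon
      rw [ha] at this
      have := Nat.le_of_dvd (by omega) this
      omega
    have h13 : 1 ≤ c1 + c3 := by omega
    rcases Nat.lt_or_ge 0 c1 with hcc | hcc
    · -- case c1 > 0 : b⁻¹ a^k b ∈ ⟨a⟩
      obtain ⟨i, hi⟩ := Finset.card_pos.mp hcc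
      rw [Finset.mem_filter] at hi
      obtain ⟨_, heq⟩ := hi
      have h' : a ^ i = b⁻¹ * a ^ k * b := by
        calc a ^ i = (b⁻¹ * a ^ k) * ((a ^ k)⁻¹ * (b * a ^ i)) := by group
          _ = b⁻¹ * a ^ k * b := by rw [← he, heq]
      have hmem : b⁻¹ * a ^ k * b ∈ Subgroup.zpowers a :=
        Subgroup.mem_zpowers_iff.mpr ⟨(i : ℤ), by rw [zpow_natCast, h']⟩
      exact hbk (aux_normalizer a b n (by omega) ha k hak1 hmem)
    · -- case c3 > 0 : b⁻¹ a b ∈ ⟨a⟩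
      have hc3pos : 0 < c3 := by omega
      obtain ⟨i, hi⟩ := Finset.card_pos.mp hc3pos
      rw [Finset.mem_filter] at hi
      obtain ⟨_, heq⟩ := hi
      have h' : a ^ i = b⁻¹ * a⁻¹ * b := by
        calc a ^ i = (b⁻¹ * a⁻¹) * (a * (b * a ^ i)) := by group
          _ = b⁻¹ * a⁻¹ * b := by rw [heq]
      have hmem : b⁻¹ * a ^ 1 * b ∈ Subgroup.zpowers a := by
        refine Subgroup.mem_zpowers_iff.mpr ⟨-(i : ℤ), ?_⟩
        rw [zpow_neg, zpow_natCast, h', pow_one]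
        group
      have := aux_normalizer a b n (by omega) ha 1 ha1 hmem
      rw [pow_one] at this
      exact hb this
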